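/- Let Γ be a distance-regular graph of order (s,t) with diameter D ≥ 2. Then the smallest eigenvalue θ_D of (the adjacency matrix of) Γ satisfies θ_D ≥ -t-1. Moreover, if s > t then θ_D = -t-1. -/

import Mathlib

/-- `G` is a distance-regular graph with diameter `D` and intersection numbers
`c i`, `a i`, `b i`. -/
def IsDRG {V : Type*} [Fintype V] (G : SimpleGraph V) (D : ℕ) (c a b : ℕ → ℕ) : Prop :=
  G.Connected ∧ (∀ x y : V, G.dist x y ≤ D) ∧ (∃ x y : V, G.dist x y = D) ∧
  ∀ (x y : V) (i : ℕ), G.dist x y = i → i ≤ D →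
    ({z : V | G.Adj y z ∧ G.dist x z + 1 = i}.ncard = c i ∧
     {z : V | G.Adj y z ∧ G.dist x z = i}.ncard = a i ∧
     {z : V | G.Adj y z ∧ G.dist x z = i + 1}.ncard = b i)

/-- The local graph of every vertex of `G` is a disjoint union of `t+1` cliques of
size `s`, i.e. `G` is of order `(s,t)`. -/
def IsOfOrder {V : Type*} [Fintype V] [DecidableEq V] (G : SimpleGraph V)
    (s t : ℕ) : Prop :=
  ∀ x : V, ∃ P : Finset (Finset V),
    P.card = t + 1 ∧
    (∀ C ∈ P, C.card = s ∧ ∀ v ∈ C, ∀ w ∈ C, v ≠ w → G.Adj v w) ∧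
    (∀ C ∈ P, ∀ C' ∈ P, C ≠ C' → Disjoint C C') ∧
    (∀ v : V, v ∈ P.biUnion id ↔ G.Adj x v) ∧
    (∀ C ∈ P, ∀ C' ∈ P, ∀ v ∈ C, ∀ w ∈ C', G.Adj v w → C = C')

open Matrix

section Aux

variable {V : Type*} [Fintype V] [DecidableEq V] (G : SimpleGraph V) (s t : ℕ)
  (P : V → Finset (Finset V))

variable {G s t P}

variable
  (hcard : ∀ x, (P x).card = t + 1)
  (hclq : ∀ x, ∀ C ∈ P x, C.card = s ∧ ∀ v ∈ C, ∀ w ∈ C, v ≠ w → G.Adj v w)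
  (hdisj : ∀ x, ∀ C ∈ P x, ∀ C' ∈ P x, C ≠ C' → Disjoint C C')
  (hnbr : ∀ x, ∀ v : V, v ∈ (P x).biUnion id ↔ G.Adj x v)
  (huniq : ∀ x, ∀ C ∈ P x, ∀ C' ∈ P x, ∀ v ∈ C, ∀ w ∈ C', G.Adj v w → C = C')

/-- The global set of (s+1)-cliques. -/
noncomputable def KK (G : SimpleGraph V) (P : V → Finset (Finset V)) : Finset (Finset V) :=
  Finset.univ.biUnion (fun x => (P x).image (insert x))

include hnbr in
lemma block_adj {x : V} {C : Finset V} (hC : C ∈ P x) {v : V} (hv : v ∈ C) : G.Adj x v :=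
  (hnbr x v).mp (Finset.mem_biUnion.mpr ⟨C, hC, hv⟩)

include hnbr in
lemma self_not_mem_block {x : V} {C : Finset V} (hC : C ∈ P x) : x ∉ C :=
  fun hx => G.irrefl (block_adj hnbr hC hx)

include hclq hnbr in
lemma memK_card {Q : Finset V} (hQ : Q ∈ KK G P) : Q.card = s + 1 := by
  obtain ⟨x, -, hQ⟩ := Finset.mem_biUnion.mp hQ
  obtain ⟨C, hC, rfl⟩ := Finset.mem_image.mp hQ
  rw [Finset.card_insert_of_notMem (self_not_mem_block hnbr hC), (hclq x C hC).1]

include hclq hnbr in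
lemma memK_clique {Q : Finset V} (hQ : Q ∈ KK G P) :
    ∀ v ∈ Q, ∀ w ∈ Q, v ≠ w → G.Adj v w := by
  obtain ⟨x, -, hQ⟩ := Finset.mem_biUnion.mp hQ
  obtain ⟨C, hC, rfl⟩ := Finset.mem_image.mp hQ
  intro v hv w hw hvw
  rcases Finset.mem_insert.mp hv with hv | hv <;>
    rcases Finset.mem_insert.mp hw with hw | hw
  · exact absurd (hv.trans hw.symm) hvw
  · exact hv ▸ block_adj hnbr hC hw
  · exact hw ▸ (block_adj hnbr hC hv).symm
  · exact (hclq x C hC).2 v hv w hw hvw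

include hclq hnbr huniq in
lemma erase_mem_block {Q : Finset V} (hQ : Q ∈ KK G P) {x : V} (hx : x ∈ Q) :
    Q.erase x ∈ P x := by
  obtain ⟨y, -, hQ'⟩ := Finset.mem_biUnion.mp hQ
  obtain ⟨C, hC, hins⟩ := Finset.mem_image.mp hQ'
  by_cases hxy : x = y
  · subst hxy
    rw [← hins, Finset.erase_insert (self_not_mem_block hnbr hC)]
    exact hC
  -- x ≠ y
  have hyQ : y ∈ Q := by rw [← hins]; exact Finset.mem_insert_self _ _
  have hyE : y ∈ Q.erase x := Finset.mem_erase.mpr ⟨fun h => hxy h.symm, hyQ⟩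
  -- every element of Q.erase x is adjacent to x
  have hadj : ∀ z ∈ Q.erase x, G.Adj x z := fun z hz => by
    obtain ⟨hzx, hzQ⟩ := Finset.mem_erase.mp hz
    exact memK_clique hclq hnbr hQ x hx z hzQ (fun h => hzx h.symm)
  -- the block of P x containing y
  obtain ⟨B, hB, hyB⟩ := Finset.mem_biUnion.mp ((hnbr x y).mpr (hadj y hyE))
  have hsub : Q.erase x ⊆ B := by
    intro z hz
    by_cases hzy : z = y
    · subst hzy; exact hyB
    · obtain ⟨Bz, hBz, hzBz⟩ := Finset.mem_biUnion.mp ((hnbr x z).mpr (hadj z hz))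
      have : G.Adj z y := memK_clique hclq hnbr hQ z (Finset.mem_of_mem_erase hz) y hyQ hzy
      have := huniq x Bz hBz B hB z hzBz y hyB this
      subst this; exact hzBz
  have hcards : B.card ≤ (Q.erase x).card := by
    rw [Finset.card_erase_of_mem hx, memK_card hclq hnbr hQ, (hclq x B hB).1]
    omega
  rw [Finset.eq_of_subset_of_card_le hsub hcards]
  exact hB

lemma insert_memK {x : V} {C : Finset V} (hC : C ∈ P x) : insert x C ∈ KK G P :=
  Finset.mem_biUnion.mpr ⟨x, Finset.mem_univ x, Finset.mem_image_of_mem _ hC⟩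

include hclq hnbr huniq in
lemma countK_one (x : V) :
    ((KK G P).filter (fun Q => x ∈ Q)).card = (P x).card := by
  refine Finset.card_bij' (fun Q _ => Q.erase x) (fun C _ => insert x C)
    (fun Q hQ => ?_) (fun C hC => ?_) (fun Q hQ => ?_) (fun C hC => ?_)
  · obtain ⟨hQK, hxQ⟩ := Finset.mem_filter.mp hQ
    exact erase_mem_block hclq hnbr huniq hQK hxQ
  · exact Finset.mem_filter.mpr ⟨insert_memK hC, Finset.mem_insert_self _ _⟩
  · exact Finset.insert_erase (Finset.mem_filter.mp hQ).2
  · exact Finset.erase_insert (self_not_mem_block hnbr hC)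


include hclq hdisj hnbr huniq in
lemma countK_adj {x y : V} (hxy : G.Adj x y) :
    ((KK G P).filter (fun Q => x ∈ Q ∧ y ∈ Q)).card = 1 := by
  obtain ⟨C0, hC0, hyC0⟩ := Finset.mem_biUnion.mp ((hnbr x y).mpr hxy)
  rw [Finset.card_eq_one]
  refine ⟨insert x C0, ?_⟩
  ext Q
  simp only [Finset.mem_filter, Finset.mem_singleton]
  constructor
  · rintro ⟨hQK, hxQ, hyQ⟩
    have hE := erase_mem_block hclq hnbr huniq hQK hxQ
    have hyE : y ∈ Q.erase x := Finset.mem_erase.mpr ⟨fun h => G.irrefl (h ▸ hxy), hyQ⟩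
    have : Q.erase x = C0 := by
      by_contra hne
      exact Finset.disjoint_left.mp (hdisj x _ hE _ hC0 hne) hyE hyC0
    rw [← this, Finset.insert_erase hxQ]
  · rintro rfl
    exact ⟨insert_memK hC0, Finset.mem_insert_self _ _,
      Finset.mem_insert_of_mem hyC0⟩

include hclq hnbr in
lemma countK_nonadj {x y : V} (hne : x ≠ y) (hxy : ¬ G.Adj x y) :
    ((KK G P).filter (fun Q => x ∈ Q ∧ y ∈ Q)).card = 0 := by
  rw [Finset.card_eq_zero, Finset.filter_eq_empty_iff]
  rintro Q hQ ⟨hxQ, hyQ⟩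
  exact hxy (memK_clique hclq hnbr hQ x hxQ y hyQ hne)

end Aux

theorem stmt_8 {V : Type*} [Fintype V] [DecidableEq V] (G : SimpleGraph V)
    [DecidableRel G.Adj] (s t D : ℕ) (c a b : ℕ → ℕ)
    (hs : 1 ≤ s) (ht : 1 ≤ t) (hD : 2 ≤ D)
    (hdrg : IsDRG G D c a b) (horder : IsOfOrder G s t) :
    (∀ θ : ℝ, Module.End.HasEigenvalue (Matrix.toLin' (G.adjMatrix ℝ)) θ →
        -(t : ℝ) - 1 ≤ θ) ∧
    (t < s → Module.End.HasEigenvalue (Matrix.toLin' (G.adjMatrix ℝ)) (-(t : ℝ) - 1)) := by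
  classical
  choose P hcard hclq hdisj hnbr huniq using horder
  set K : Finset (Finset V) := KK G P with hK
  -- the vertex–clique incidence matrix
  set M : Matrix V (↥K) ℝ := fun x Q => if x ∈ (Q : Finset V) then 1 else 0 with hM
  set N : Matrix V V ℝ := G.adjMatrix ℝ + ((t : ℝ) + 1) • 1 with hN
  have entry : ∀ x y : V, (M * Mᵀ) x y =
      ((K.filter (fun Q => x ∈ Q ∧ y ∈ Q)).card : ℝ) := by
    intro x y
    rw [← Finset.sum_boole]
    rw [Matrix.mul_apply]
    rw [← Finset.sum_coe_sort K (fun Q => if x ∈ Q ∧ y ∈ Q then (1:ℝ) else 0)]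
    refine Finset.sum_congr rfl fun Q _ => ?_
    rw [Matrix.transpose_apply]
    simp only [hM, ite_and]
    split_ifs <;> ring
  have hMM : M * Mᵀ = N := by
    ext x y
    rw [entry x y, hN]
    simp only [Matrix.add_apply, SimpleGraph.adjMatrix_apply, Matrix.smul_apply,
      Matrix.one_apply, smul_eq_mul]
    rcases eq_or_ne x y with rfl | hne
    · have : (K.filter (fun Q => x ∈ Q ∧ x ∈ Q)).card = t + 1 := by
        simp only [and_self]
        rw [countK_one hclq hnbr huniq x, hcard x]
      rw [this]
      simp [G.irrefl]
    · by_cases hadj : G.Adj x y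
      · rw [countK_adj hclq hdisj hnbr huniq hadj]
        simp [hadj, hne]
      · rw [countK_nonadj hclq hnbr hne hadj]
        simp [hadj, hne]
  constructor
  · -- lower bound on eigenvalues
    intro θ hθ
    obtain ⟨v, hv⟩ := hθ.exists_hasEigenvector
    have hv0 : v ≠ 0 := hv.right
    have hAv : (G.adjMatrix ℝ) *ᵥ v = θ • v := by
      have h := hv.apply_eq_smul
      rwa [Matrix.toLin'_apply] at h
    have hquad : v ⬝ᵥ (N *ᵥ v) = (θ + ((t : ℝ) + 1)) * (v ⬝ᵥ v) := by
      rw [hN, Matrix.add_mulVec, Matrix.smul_mulVec, Matrix.one_mulVec, hAv,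
        dotProduct_add, dotProduct_smul, dotProduct_smul,
        smul_eq_mul, smul_eq_mul]
      ring
    have hpsd : 0 ≤ v ⬝ᵥ (N *ᵥ v) := by
      rw [← hMM, ← Matrix.mulVec_mulVec, Matrix.dotProduct_mulVec,
        ← Matrix.mulVec_transpose]
      exact Finset.sum_nonneg fun i _ => mul_self_nonneg _
    have hvv : 0 < v ⬝ᵥ v := by
      rcases (Finset.sum_nonneg fun i (_ : i ∈ Finset.univ) =>
        mul_self_nonneg (v i)).lt_or_eq with h | h
      · exact h
      · exact absurd (dotProduct_self_eq_zero.mp h.symm) hv0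
    rw [hquad] at hpsd
    nlinarith
  · -- s > t forces the eigenvalue -t-1
    intro hts
    have hnV : 0 < Fintype.card V := Fintype.card_pos_iff.mpr hdrg.1.nonempty
    -- double counting: K.card * (s+1) = card V * (t+1)
    have hcount : K.card * (s + 1) = Fintype.card V * (t + 1) := by
      have h1 : ∑ Q ∈ K, Q.card = K.card * (s + 1) := by
        rw [Finset.sum_congr rfl (fun Q hQ => memK_card hclq hnbr hQ),
          Finset.sum_const, smul_eq_mul]
      have h2 : ∑ Q ∈ K, Q.card = ∑ x : V, ((K.filter (fun Q => x ∈ Q)).card) := by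
        simp only [Finset.card_filter]
        rw [Finset.sum_comm]
        refine Finset.sum_congr rfl fun Q _ => ?_
        simp [Finset.sum_ite_mem]
      rw [← h1, h2]
      rw [Finset.sum_congr rfl (fun x _ => show (K.filter (fun Q => x ∈ Q)).card = t + 1 by
        convert (countK_one hclq hnbr huniq x).trans (hcard x))]
      simp only [Finset.sum_const, Finset.card_univ, smul_eq_mul]
    have hKlt : K.card < Fintype.card V := by
      have h1 : K.card * (s + 1) < Fintype.card V * (s + 1) := by
        rw [hcount]
        exact mul_lt_mul_of_pos_left (by omega) hnV
      exact lt_of_mul_lt_mul_right h1 (Nat.zero_le _)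
    have hrank : N.rank ≤ K.card := by
      rw [← hMM]
      exact le_trans (Matrix.rank_mul_le_left M Mᵀ)
        (le_trans M.rank_le_card_width (le_of_eq (Fintype.card_coe K)))
    have hker : LinearMap.ker N.mulVecLin ≠ ⊥ := by
      intro hbot
      have hrn := LinearMap.finrank_range_add_finrank_ker N.mulVecLin
      rw [hbot, finrank_bot, add_zero, Module.finrank_pi] at hrn
      have : N.rank = Fintype.card V := hrn
      omega
    obtain ⟨v, hvker, hv0⟩ := Submodule.exists_mem_ne_zero_of_ne_bot hker
    have hNv : N *ᵥ v = 0 := hvker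
    have hAv : (G.adjMatrix ℝ) *ᵥ v = (-(t : ℝ) - 1) • v := by
      have h : (G.adjMatrix ℝ) *ᵥ v + ((t : ℝ) + 1) • v = 0 := by
        rw [hN, Matrix.add_mulVec, Matrix.smul_mulVec, Matrix.one_mulVec] at hNv
        exact hNv
      have h2 : (G.adjMatrix ℝ) *ᵥ v = -(((t : ℝ) + 1) • v) :=
        eq_neg_of_add_eq_zero_left h
      rw [h2, ← neg_smul]
      congr 1
      ring
    refine Module.End.hasEigenvalue_of_hasEigenvector
      ⟨Module.End.mem_eigenspace_iff.mpr ?_, hv0⟩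
    rw [Matrix.toLin'_apply, hAv]
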